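/- Let γ : [0,1] → ℝ² be a C¹ regular curve (γ'(s) ≠ 0 for all s), let θ : ℝ² → ℝ² be a C¹ vector field, and let ψ : ℝ² × ℝ → ℝ be C¹. For each s let n(s) denote the unit normal obtained by rotating the unit tangent γ'(s)/‖γ'(s)‖ by π/2. Then the function t ↦ ∫₀¹ ψ(γ(s) + tθ(γ(s)), t) · ‖γ'(s) + t·Dθ(γ(s))γ'(s)‖ ds (the integral of ψ(·,t) over the deformed curve T_t∘γ with respect to arclength) is differentiable at t = 0 with derivative ∫₀¹ [ ψ̇(γ(s)) + ( div θ(γ(s)) − ⟨Dθ(γ(s)) n(s), n(s)⟩ ) · ψ(γ(s),0) ] ‖γ'(s)‖ ds. -/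

import Mathlib

open MeasureTheory

/-- Rotation by `π/2` in `ℝ²`, sending `(a, b)` to `(-b, a)`. -/
noncomputable def rotHalfPi (v : EuclideanSpace ℝ (Fin 2)) : EuclideanSpace ℝ (Fin 2) :=
  (EuclideanSpace.equiv (Fin 2) ℝ).symm ![-(v 1), v 0]

local notation "E2" => EuclideanSpace ℝ (Fin 2)

lemma hasDerivAt_norm_comp {f : ℝ → E2} {f' : E2} {t : ℝ} (hf : HasDerivAt f f' t)
    (h0 : f t ≠ 0) :
    HasDerivAt (fun t => ‖f t‖) ((inner ℝ f' (f t) : ℝ) / ‖f t‖) t := by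
  have h1 : HasDerivAt (fun t => ‖f t‖ ^ 2) (2 * (inner ℝ (f t) f' : ℝ)) t := hf.norm_sq
  have hne : ‖f t‖ ^ 2 ≠ 0 := pow_ne_zero _ (norm_ne_zero_iff.mpr h0)
  have h2 := h1.sqrt hne
  have heq : (fun t => Real.sqrt (‖f t‖ ^ 2)) = fun t => ‖f t‖ := by
    funext t; exact Real.sqrt_sq (norm_nonneg _)
  rw [heq] at h2
  convert h2 using 1
  rw [Real.sqrt_sq (norm_nonneg _), real_inner_comm]
  have : ‖f t‖ ≠ 0 := norm_ne_zero_iff.mpr h0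
  field_simp

lemma rotHalfPi_apply_zero (v : E2) : rotHalfPi v 0 = -(v 1) := rfl
lemma rotHalfPi_apply_one (v : E2) : rotHalfPi v 1 = v 0 := rfl

lemma euclidean_decomp (x : E2) :
    x = x 0 • EuclideanSpace.single (0 : Fin 2) (1:ℝ) + x 1 • EuclideanSpace.single (1 : Fin 2) (1:ℝ) := by
  ext i
  fin_cases i <;> simp [EuclideanSpace.single_apply]

lemma trace_eq_inner (A : E2 →L[ℝ] E2) (u : E2) (hu : u 0 ^ 2 + u 1 ^ 2 = 1) :
    LinearMap.trace ℝ E2 A.toLinearMap =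
      (inner ℝ (A u) u : ℝ) + (inner ℝ (A (rotHalfPi u)) (rotHalfPi u) : ℝ) := by
  set e0 : E2 := EuclideanSpace.single (0 : Fin 2) (1:ℝ)
  set e1 : E2 := EuclideanSpace.single (1 : Fin 2) (1:ℝ)
  have htr : LinearMap.trace ℝ E2 A.toLinearMap = (A e0) 0 + (A e1) 1 := by
    rw [LinearMap.trace_eq_matrix_trace ℝ ((EuclideanSpace.basisFun (Fin 2) ℝ).toBasis)]
    simp [Matrix.trace, LinearMap.toMatrix_apply, Fin.sum_univ_two,
      EuclideanSpace.basisFun_apply, e0, e1]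
  have hAu : A u = u 0 • A e0 + u 1 • A e1 := by
    conv_lhs => rw [euclidean_decomp u]
    simp
    rfl
  have hAn : A (rotHalfPi u) = (-(u 1)) • A e0 + (u 0) • A e1 := by
    conv_lhs => rw [euclidean_decomp (rotHalfPi u)]
    simp [rotHalfPi_apply_zero, rotHalfPi_apply_one]
    rfl
  rw [htr, hAu, hAn]
  simp only [PiLp.inner_apply, RCLike.inner_apply, starRingEnd_apply, star_trivial,
    Fin.sum_univ_two, PiLp.add_apply, PiLp.smul_apply, smul_eq_mul,
    rotHalfPi_apply_zero, rotHalfPi_apply_one]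
  linear_combination (-(A e0 0 + A e1 1)) * hu

/-- Hadamard shape derivative, boundary part (Lemma 4.1 of the paper), for a parametrized
`C¹` regular curve `γ` in `ℝ²`: the map
`t ↦ ∫₀¹ ψ(γ(s) + tθ(γ(s)), t) ‖γ'(s) + t Dθ(γ(s)) γ'(s)‖ ds` is differentiable at `t = 0`
with derivative `∫₀¹ (ψ̇ + (div θ − ⟨Dθ n, n⟩) ψ(·,0)) ‖γ'‖ ds`, where `n` is the unit normal
obtained by rotating the unit tangent by `π/2`. -/
theorem shape_derivative_boundary_integral
    (γ : ℝ → EuclideanSpace ℝ (Fin 2)) (hγ : ContDiff ℝ 1 γ)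
    (hreg : ∀ s ∈ Set.Icc (0 : ℝ) 1, deriv γ s ≠ 0)
    (θ : EuclideanSpace ℝ (Fin 2) → EuclideanSpace ℝ (Fin 2)) (hθ : ContDiff ℝ 1 θ)
    (ψ : EuclideanSpace ℝ (Fin 2) × ℝ → ℝ) (hψ : ContDiff ℝ 1 ψ) :
    HasDerivAt
      (fun t : ℝ => ∫ s in (0 : ℝ)..1,
        ψ (γ s + t • θ (γ s), t) * ‖deriv γ s + t • (fderiv ℝ θ (γ s)) (deriv γ s)‖)
      (∫ s in (0 : ℝ)..1,
        ((fderiv ℝ ψ (γ s, (0 : ℝ))) (θ (γ s), (1 : ℝ)) +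
          (LinearMap.trace ℝ (EuclideanSpace ℝ (Fin 2)) (fderiv ℝ θ (γ s)).toLinearMap -
            (inner ℝ ((fderiv ℝ θ (γ s)) (rotHalfPi (‖deriv γ s‖⁻¹ • deriv γ s)))
              (rotHalfPi (‖deriv γ s‖⁻¹ • deriv γ s)) : ℝ)) * ψ (γ s, 0)) * ‖deriv γ s‖)
      0 := by
  set v : ℝ → E2 := deriv γ with hv_def
  set A : ℝ → E2 →L[ℝ] E2 := fun s => fderiv ℝ θ (γ s) with hA_def
  set w : ℝ → E2 := fun s => A s (v s) with hw_def
  -- continuity facts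
  have hγc : Continuous γ := hγ.continuous
  have hvc : Continuous v := hγ.continuous_deriv le_rfl
  have hθc : Continuous θ := hθ.continuous
  have hAc : Continuous A := (hθ.continuous_fderiv one_ne_zero).comp hγc
  have hwc : Continuous w := hAc.clm_apply hvc
  have hψc : Continuous ψ := hψ.continuous
  have hdψ : Continuous (fderiv ℝ ψ) := hψ.continuous_fderiv one_ne_zero
  -- bound on ‖A s‖
  obtain ⟨M, hM⟩ := isCompact_Icc.exists_bound_of_continuousOn
    (s := Set.Icc (0:ℝ) 1) hAc.continuousOn
  have hM0 : 0 ≤ M := le_trans (norm_nonneg _) (hM 0 ⟨le_refl 0, zero_le_one⟩)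
  set ε : ℝ := (2 * (M + 1))⁻¹ with hε_def
  have hε : 0 < ε := by positivity
  -- key nonvanishing estimate
  have key : ∀ s ∈ Set.Icc (0:ℝ) 1, ∀ t : ℝ, |t| ≤ ε →
      ‖v s‖ / 2 ≤ ‖v s + t • w s‖ := by
    intro s hs t ht
    have hAs := hM s hs
    have h1 : ‖t • w s‖ ≤ (1/2) * ‖v s‖ := by
      rw [norm_smul, Real.norm_eq_abs]
      have h2 : ‖w s‖ ≤ M * ‖v s‖ :=
        le_trans ((A s).le_opNorm (v s)) (by gcongr;)
      calc |t| * ‖w s‖ ≤ ε * (M * ‖v s‖) := by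
            apply mul_le_mul ht h2 (norm_nonneg _) hε.le
        _ ≤ (1/2) * ‖v s‖ := by
            rw [hε_def, ← mul_assoc]
            gcongr
            rw [inv_mul_le_iff₀ (by positivity)]
            nlinarith
    have h : ‖v s‖ ≤ ‖v s + t • w s‖ + ‖t • w s‖ := by
      simpa using norm_add_le (v s + t • w s) (-(t • w s))
    linarith
  have key' : ∀ s ∈ Set.Icc (0:ℝ) 1, ∀ t : ℝ, |t| ≤ ε → v s + t • w s ≠ 0 := by
    intro s hs t ht
    have h1 := key s hs t ht
    have h2 : 0 < ‖v s‖ := norm_pos_iff.mpr (hreg s hs)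
    intro h
    rw [h, norm_zero] at h1
    linarith
  -- the derivative candidate
  set F' : ℝ → ℝ → ℝ := fun t s =>
    (fderiv ℝ ψ (γ s + t • θ (γ s), t)) (θ (γ s), 1) * ‖v s + t • w s‖
      + ψ (γ s + t • θ (γ s), t) *
        ((inner ℝ (w s) (v s + t • w s) : ℝ) / ‖v s + t • w s‖) with hF'_def
  -- joint continuity of F' on the compact set
  have hcont : ContinuousOn (fun p : ℝ × ℝ => F' p.1 p.2)
      (Set.Icc (-ε) ε ×ˢ Set.Icc (0:ℝ) 1) := by
    have harg : Continuous (fun p : ℝ × ℝ => ((γ p.2 + p.1 • θ (γ p.2), p.1) : E2 × ℝ)) := by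
      fun_prop
    have h1 : Continuous (fun p : ℝ × ℝ =>
        (fderiv ℝ ψ (γ p.2 + p.1 • θ (γ p.2), p.1)) ((θ (γ p.2), 1) : E2 × ℝ)) := by
      exact (hdψ.comp harg).clm_apply (by fun_prop)
    have h2 : Continuous (fun p : ℝ × ℝ => ‖v p.2 + p.1 • w p.2‖) := by fun_prop
    have h3 : Continuous (fun p : ℝ × ℝ => ψ (γ p.2 + p.1 • θ (γ p.2), p.1)) :=
      hψc.comp harg
    have h4 : Continuous (fun p : ℝ × ℝ => (inner ℝ (w p.2) (v p.2 + p.1 • w p.2) : ℝ)) := by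
      exact (hwc.comp continuous_snd).inner (by fun_prop)
    have h5 : ∀ p ∈ Set.Icc (-ε) ε ×ˢ Set.Icc (0:ℝ) 1, ‖v p.2 + p.1 • w p.2‖ ≠ 0 := by
      rintro ⟨t, s⟩ ⟨ht, hs⟩
      exact norm_ne_zero_iff.mpr (key' s hs t (abs_le.mpr ht))
    exact ((h1.continuousOn.mul h2.continuousOn).add
      (h3.continuousOn.mul ((h4.continuousOn.div h2.continuousOn h5))))
  obtain ⟨C, hC⟩ := ((isCompact_Icc.prod isCompact_Icc).exists_bound_of_continuousOn hcont)
  -- apply differentiation under the integral sign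
  have main := intervalIntegral.hasDerivAt_integral_of_dominated_loc_of_deriv_le
    (F := fun t s => ψ (γ s + t • θ (γ s), t) * ‖v s + t • w s‖)
    (F' := F') (x₀ := (0:ℝ)) (a := (0:ℝ)) (b := 1) (μ := volume)
    (bound := fun _ => C) (Metric.ball_mem_nhds (0:ℝ) hε)
    (Filter.Eventually.of_forall (fun t => by
      apply Continuous.aestronglyMeasurable
      fun_prop))
    (by
      apply Continuous.intervalIntegrable
      fun_prop)
    (by
      apply ContinuousOn.aestronglyMeasurable _ measurableSet_uIoc
      have hsub : Set.uIoc (0:ℝ) 1 ⊆ Set.Icc (0:ℝ) 1 := by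
        rw [Set.uIoc_of_le zero_le_one]
        exact Set.Ioc_subset_Icc_self
      have hcont0 : ContinuousOn (F' 0) (Set.Icc (0:ℝ) 1) := by
        intro s hs
        have hm : ((0:ℝ), s) ∈ Set.Icc (-ε) ε ×ˢ Set.Icc (0:ℝ) 1 :=
          ⟨⟨neg_nonpos.mpr hε.le, hε.le⟩, hs⟩
        exact (hcont ((0:ℝ), s) hm).comp
          ((continuous_const.prodMk continuous_id).continuousWithinAt)
          (fun x hx => ⟨⟨neg_nonpos.mpr hε.le, hε.le⟩, hx⟩)
      exact hcont0.mono hsub)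
    (Filter.Eventually.of_forall (fun s => by
      intro hs t ht
      have hsub : Set.uIoc (0:ℝ) 1 ⊆ Set.Icc (0:ℝ) 1 := by
        rw [Set.uIoc_of_le zero_le_one]
        exact Set.Ioc_subset_Icc_self
      have ht' : t ∈ Set.Icc (-ε) ε := by
        rw [Metric.mem_ball, Real.dist_eq, sub_zero] at ht
        exact ⟨neg_le_of_abs_le ht.le, le_of_abs_le ht.le⟩
      have := hC (t, s) ⟨ht', hsub hs⟩
      simpa using this))
    intervalIntegrable_const
    (Filter.Eventually.of_forall (fun s => by
      intro hs t ht
      have hsub : Set.uIoc (0:ℝ) 1 ⊆ Set.Icc (0:ℝ) 1 := by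
        rw [Set.uIoc_of_le zero_le_one]
        exact Set.Ioc_subset_Icc_self
      rw [Metric.mem_ball, Real.dist_eq, sub_zero] at ht
      have hne : v s + t • w s ≠ 0 := key' s (hsub hs) t ht.le
      -- derivative of ψ part
      have hg : HasDerivAt (fun t : ℝ => ((γ s + t • θ (γ s), t) : E2 × ℝ))
          ((θ (γ s), 1) : E2 × ℝ) t := by
        have h1 : HasDerivAt (fun t : ℝ => γ s + t • θ (γ s)) (θ (γ s)) t := by
          simpa using (((hasDerivAt_id t).smul_const (θ (γ s))).const_add (γ s))
        exact h1.prodMk (hasDerivAt_id t)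
      have h1 : HasDerivAt (fun t : ℝ => ψ (γ s + t • θ (γ s), t))
          ((fderiv ℝ ψ (γ s + t • θ (γ s), t)) ((θ (γ s), 1) : E2 × ℝ)) t :=
        ((hψ.differentiable one_ne_zero) _).hasFDerivAt.comp_hasDerivAt t hg
      have h2 : HasDerivAt (fun t : ℝ => ‖v s + t • w s‖)
          ((inner ℝ (w s) (v s + t • w s) : ℝ) / ‖v s + t • w s‖) t := by
        apply hasDerivAt_norm_comp _ hne
        simpa using (((hasDerivAt_id t).smul_const (w s)).const_add (v s))
      exact h1.mul h2))
  -- rewrite the value of the derivative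
  have hval : (∫ s in (0:ℝ)..1, F' 0 s) =
      ∫ s in (0 : ℝ)..1,
        ((fderiv ℝ ψ (γ s, (0 : ℝ))) (θ (γ s), (1 : ℝ)) +
          (LinearMap.trace ℝ (EuclideanSpace ℝ (Fin 2)) (fderiv ℝ θ (γ s)).toLinearMap -
            (inner ℝ ((fderiv ℝ θ (γ s)) (rotHalfPi (‖deriv γ s‖⁻¹ • deriv γ s)))
              (rotHalfPi (‖deriv γ s‖⁻¹ • deriv γ s)) : ℝ)) * ψ (γ s, 0)) * ‖deriv γ s‖ := by
    apply intervalIntegral.integral_congr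
    intro s hs
    rw [Set.uIcc_of_le zero_le_one] at hs
    have hvne : v s ≠ 0 := hreg s hs
    have hvn : ‖v s‖ ≠ 0 := norm_ne_zero_iff.mpr hvne
    -- trace identity
    have hu : (‖v s‖⁻¹ • v s) 0 ^ 2 + (‖v s‖⁻¹ • v s) 1 ^ 2 = 1 := by
      have h1 : ‖(‖v s‖⁻¹ • v s)‖ = 1 := norm_smul_inv_norm hvne
      have h2 : (inner ℝ (‖v s‖⁻¹ • v s) (‖v s‖⁻¹ • v s) : ℝ) = 1 := by
        rw [real_inner_self_eq_norm_sq, h1]; norm_num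
      rw [PiLp.inner_apply] at h2
      simp only [RCLike.inner_apply, starRingEnd_apply, star_trivial,
        Fin.sum_univ_two] at h2
      linear_combination h2
    have htr := trace_eq_inner (A s) (‖v s‖⁻¹ • v s) hu
    have hAuu : (inner ℝ ((A s) (‖v s‖⁻¹ • v s)) (‖v s‖⁻¹ • v s) : ℝ)
        = ‖v s‖⁻¹ * ‖v s‖⁻¹ * (inner ℝ (w s) (v s) : ℝ) := by
      rw [_root_.map_smul, real_inner_smul_left, real_inner_smul_right]
      ring
    simp only [hF'_def, zero_smul, add_zero]
    rw [htr]
    rw [hAuu]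
    have : (fderiv ℝ ψ (γ s, (0:ℝ))) ((θ (γ s), 1) : E2 × ℝ) * ‖v s‖
        + ψ (γ s, 0) * ((inner ℝ (w s) (v s) : ℝ) / ‖v s‖)
        = ((fderiv ℝ ψ (γ s, (0:ℝ))) ((θ (γ s), 1) : E2 × ℝ)
          + (‖v s‖⁻¹ * ‖v s‖⁻¹ * (inner ℝ (w s) (v s) : ℝ)) * ψ (γ s, 0)) * ‖v s‖ := by
      field_simp
    rw [← hv_def]
    convert this using 2; simp only [hA_def]; ring_nf
  rw [← hval]
  exact main.2
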